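/- Let μ, ν be probability densities on an interval [a, b] such that μ(x) ≥ μ_min > 0 and ν(x) ≥ μ_min > 0 for all x ∈ [a, b]. Then the 1-D 2-Wasserstein distance satisfies d_{W2}(μ, ν) ≤ (1/μ_min) · ∫_a^b |μ(x) − ν(x)| dx. Moreover the quantile functions satisfy the uniform bound sup_{z ∈ (0,1)} |Q_μ(z) − Q_ν(z)| ≤ (1/μ_min) · ∫_a^b |μ(x) − ν(x)| dx. -/

import Mathlib

open MeasureTheory Real Set

/-- CDF of a density `μ` on `ℝ`: `F_μ(t) = ∫_{-∞}^t μ`. -/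
noncomputable def cdfOf (μ : ℝ → ℝ) (t : ℝ) : ℝ := ∫ x in Set.Iic t, μ x

/-- Quantile function `Q_μ(z) = inf {t : F_μ(t) ≥ z}`. -/
noncomputable def quantileOf (μ : ℝ → ℝ) (z : ℝ) : ℝ := sInf {t : ℝ | z ≤ cdfOf μ t}

/-- `d_{Wp}^p(μ, ν) = ∫₀¹ |Q_μ(z) − Q_ν(z)|^p dz`. -/
noncomputable def wassersteinPow (p : ℝ) (μ ν : ℝ → ℝ) : ℝ :=
  ∫ z in Set.Ioo (0:ℝ) 1, |quantileOf μ z - quantileOf ν z| ^ p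

/-- 1-D `p`-Wasserstein distance between densities. -/
noncomputable def wasserstein (p : ℝ) (μ ν : ℝ → ℝ) : ℝ :=
  (wassersteinPow p μ ν) ^ (1 / p)

/-- Line projection of an image `f : ℝ² → ℝ` at angle `θ`:
`P_θ f(s) = ∫ f(s(cos θ, sin θ) + t(−sin θ, cos θ)) dt`. -/
noncomputable def lineProj (f : ℝ × ℝ → ℝ) (θ : ℝ) (s : ℝ) : ℝ :=
  ∫ t : ℝ, f (s * Real.cos θ - t * Real.sin θ, s * Real.sin θ + t * Real.cos θ)

/-- `d_{SWp}^p(f, g) = (1/2π) ∫₀^{2π} d_{Wp}^p(P_θ f, P_θ g) dθ`. -/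
noncomputable def slicedWassersteinPow (p : ℝ) (f g : ℝ × ℝ → ℝ) : ℝ :=
  (1 / (2 * Real.pi)) * ∫ θ in Set.Ioo (0:ℝ) (2 * Real.pi),
    wassersteinPow p (lineProj f θ) (lineProj g θ)

/-- Sliced `p`-Wasserstein distance between two images. -/
noncomputable def slicedWasserstein (p : ℝ) (f g : ℝ × ℝ → ℝ) : ℝ :=
  (slicedWassersteinPow p f g) ^ (1 / p)

/-- Rotation of an image by angle `α`: `(R_α g)(x) = g(R_α⁻¹ x)`. -/
noncomputable def rotImage (α : ℝ) (g : ℝ × ℝ → ℝ) : ℝ × ℝ → ℝ :=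
  fun x => g (x.1 * Real.cos α + x.2 * Real.sin α, -x.1 * Real.sin α + x.2 * Real.cos α)

lemma aux_integrable {a b : ℝ} (hab : a ≤ b) (μ : ℝ → ℝ)
    (hsupp : ∀ x, x ∉ Set.Icc a b → μ x = 0)
    (hint : ∫ x in a..b, μ x = 1) : Integrable μ := by
  have hii : IntervalIntegrable μ volume a b := by
    by_contra h
    rw [intervalIntegral.integral_undef h] at hint
    norm_num at hint
  have h1 : IntegrableOn μ (Set.Ioc a b) :=
    (intervalIntegrable_iff_integrableOn_Ioc_of_le hab).1 hii
  have h2 : IntegrableOn μ (Set.Icc a b) := by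
    rwa [integrableOn_Icc_iff_integrableOn_Ioc]
  have he : μ = Set.indicator (Set.Icc a b) μ := by
    funext x
    by_cases hx : x ∈ Set.Icc a b
    · rw [Set.indicator_of_mem hx]
    · rw [Set.indicator_of_notMem hx, hsupp x hx]
  rw [he]
  exact h2.integrable_indicator measurableSet_Icc

lemma aux_cdf_diff (μ : ℝ → ℝ) (hμ : Integrable μ) (s t : ℝ) :
    cdfOf μ t - cdfOf μ s = ∫ x in s..t, μ x :=
  intervalIntegral.integral_Iic_sub_Iic hμ.integrableOn hμ.integrableOn

lemma aux_cdf_zero {a b : ℝ} (μ : ℝ → ℝ) (hsupp : ∀ x, x ∉ Set.Icc a b → μ x = 0)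
    {t : ℝ} (ht : t < a) : cdfOf μ t = 0 := by
  unfold cdfOf
  rw [setIntegral_congr_fun measurableSet_Iic (g := fun _ => (0:ℝ))
    (fun x hx => hsupp x (fun hmem => absurd hmem.1 (not_le.2 (lt_of_le_of_lt hx ht))))]
  simp

lemma aux_cdf_mono (μ : ℝ → ℝ) (hμ : Integrable μ) (hnn : ∀ x, 0 ≤ μ x) :
    Monotone (cdfOf μ) := by
  intro s t hst
  have h := aux_cdf_diff μ hμ s t
  have h2 : 0 ≤ ∫ x in s..t, μ x :=
    intervalIntegral.integral_nonneg hst (fun x _ => hnn x)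
  linarith

lemma aux_cdf_b {a b : ℝ} (hab : a < b) (μ : ℝ → ℝ) (hμ : Integrable μ)
    (hsupp : ∀ x, x ∉ Set.Icc a b → μ x = 0)
    (hint : ∫ x in a..b, μ x = 1) : cdfOf μ b = 1 := by
  have h0 := aux_cdf_zero (b := b) μ hsupp (show a - 1 < a by linarith)
  have h := aux_cdf_diff μ hμ (a - 1) b
  rw [h0, sub_zero] at h
  rw [h, ← intervalIntegral.integral_add_adjacent_intervals
    (b := a) hμ.intervalIntegrable hμ.intervalIntegrable, hint]
  have hz : ∫ x in (a-1)..a, μ x = 0 := by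
    rw [intervalIntegral.integral_of_le (by linarith), integral_Ioc_eq_integral_Ioo,
      setIntegral_congr_fun measurableSet_Ioo (g := fun _ => (0:ℝ))
      (fun x hx => hsupp x (fun hmem => absurd hmem.1 (not_le.2 hx.2)))]
    simp
  rw [hz]; ring

lemma aux_cdf_close {a b : ℝ} (hab : a < b) (μ ν : ℝ → ℝ)
    (hμ : Integrable μ) (hν : Integrable ν)
    (hμsupp : ∀ x, x ∉ Set.Icc a b → μ x = 0) (hνsupp : ∀ x, x ∉ Set.Icc a b → ν x = 0)
    (t : ℝ) :
    |cdfOf μ t - cdfOf ν t| ≤ ∫ x in a..b, |μ x - ν x| := by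
  have hsub : Integrable (fun x => μ x - ν x) := hμ.sub hν
  have h1 : cdfOf μ t - cdfOf ν t = ∫ x in Set.Iic t, (μ x - ν x) :=
    (integral_sub hμ.integrableOn hν.integrableOn).symm
  rw [h1]
  calc |∫ x in Set.Iic t, (μ x - ν x)| ≤ ∫ x in Set.Iic t, |μ x - ν x| := by
        simpa [Real.norm_eq_abs] using
          norm_integral_le_integral_norm (μ := volume.restrict (Set.Iic t))
            (fun x => μ x - ν x)
    _ ≤ ∫ x, |μ x - ν x| :=
        setIntegral_le_integral hsub.abs (Filter.Eventually.of_forall fun x => abs_nonneg _)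
    _ = ∫ x in Set.Icc a b, |μ x - ν x| :=
        (setIntegral_eq_integral_of_forall_compl_eq_zero
          (fun x hx => by rw [hμsupp x hx, hνsupp x hx, sub_zero, abs_zero])).symm
    _ = ∫ x in a..b, |μ x - ν x| := by
        rw [integral_Icc_eq_integral_Ioc, intervalIntegral.integral_of_le hab.le]

lemma aux_cdf_floor {a b μmin : ℝ} (μ : ℝ → ℝ) (hμ : Integrable μ)
    (hfloor : ∀ x ∈ Set.Icc a b, μmin ≤ μ x) {s t : ℝ}
    (has : a ≤ s) (hst : s ≤ t) (htb : t ≤ b) :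
    cdfOf μ s + μmin * (t - s) ≤ cdfOf μ t := by
  have h := aux_cdf_diff μ hμ s t
  have h2 : μmin * (t - s) ≤ ∫ x in s..t, μ x := by
    have := intervalIntegral.integral_mono_on (f := fun _ => μmin) hst
      intervalIntegrable_const hμ.intervalIntegrable
      (fun x hx => hfloor x ⟨le_trans has hx.1, le_trans hx.2 htb⟩)
    rwa [intervalIntegral.integral_const, smul_eq_mul, mul_comm] at this
  linarith

lemma aux_quantile_mem {a b : ℝ} (hab : a < b) (μ : ℝ → ℝ) (hμ : Integrable μ)
    (hsupp : ∀ x, x ∉ Set.Icc a b → μ x = 0) (hint : ∫ x in a..b, μ x = 1)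
    {z : ℝ} (hz : z ∈ Set.Ioo (0:ℝ) 1) :
    (Set.Nonempty {t : ℝ | z ≤ cdfOf μ t}) ∧ (a ∈ lowerBounds {t : ℝ | z ≤ cdfOf μ t}) := by
  constructor
  · exact ⟨b, by rw [Set.mem_setOf_eq, aux_cdf_b hab μ hμ hsupp hint]; exact hz.2.le⟩
  · intro t ht
    by_contra h
    push_neg at h
    rw [Set.mem_setOf_eq, aux_cdf_zero μ hsupp h] at ht
    exact absurd ht (not_le.2 hz.1)

lemma aux_quantile_le {a b μmin : ℝ} (hab : a < b) (hμmin : 0 < μmin)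
    (μ ν : ℝ → ℝ) (hμ : Integrable μ) (hν : Integrable ν)
    (hμnonneg : ∀ x, 0 ≤ μ x) (hνnonneg : ∀ x, 0 ≤ ν x)
    (hμsupp : ∀ x, x ∉ Set.Icc a b → μ x = 0) (hνsupp : ∀ x, x ∉ Set.Icc a b → ν x = 0)
    (hμint : ∫ x in a..b, μ x = 1) (hνint : ∫ x in a..b, ν x = 1)
    (hμfloor : ∀ x ∈ Set.Icc a b, μmin ≤ μ x)
    {z : ℝ} (hz : z ∈ Set.Ioo (0:ℝ) 1) :
    quantileOf μ z ≤ quantileOf ν z + (∫ x in a..b, |μ x - ν x|) / μmin := by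
  set L := ∫ x in a..b, |μ x - ν x| with hLdef
  have hL0 : 0 ≤ L := intervalIntegral.integral_nonneg hab.le fun x _ => abs_nonneg _
  have hLdiv : 0 ≤ L / μmin := div_nonneg hL0 hμmin.le
  have hmono := aux_cdf_mono μ hμ hμnonneg
  obtain ⟨hμne, hμlb⟩ := aux_quantile_mem hab μ hμ hμsupp hμint hz
  obtain ⟨hνne, hνlb⟩ := aux_quantile_mem hab ν hν hνsupp hνint hz
  have hq_ge_a : a ≤ quantileOf ν z := le_csInf hνne hνlb
  refine le_of_forall_pos_le_add fun ε hε => ?_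
  have hlt : sInf {t : ℝ | z ≤ cdfOf ν t} < quantileOf ν z + ε/2 := by
    unfold quantileOf; linarith
  obtain ⟨t, htS, htlt⟩ := exists_lt_of_csInf_lt hνne hlt
  set u := quantileOf ν z + ε/2 with hu
  have hzu : z ≤ cdfOf ν u :=
    le_trans htS (aux_cdf_mono ν hν hνnonneg htlt.le)
  have hmem : z ≤ cdfOf μ (u + L / μmin) := by
    by_cases hcase : b ≤ u + L / μmin
    · calc z ≤ 1 := hz.2.le
        _ = cdfOf μ b := (aux_cdf_b hab μ hμ hμsupp hμint).symm
        _ ≤ cdfOf μ (u + L/μmin) := hmono hcase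
    · push_neg at hcase
      have hau : a ≤ u := by simp only [hu]; linarith
      have huu : u ≤ u + L/μmin := by linarith
      have hfl := aux_cdf_floor μ hμ hμfloor hau huu hcase.le
      have hclose := aux_cdf_close hab μ ν hμ hν hμsupp hνsupp u
      have hmc : μmin * (u + L/μmin - u) = L := by field_simp; ring
      have h1 : cdfOf ν u - L ≤ cdfOf μ u := by
        have := abs_le.1 hclose
        linarith [this.1]
      linarith
  have hle : quantileOf μ z ≤ u + L / μmin := csInf_le ⟨a, hμlb⟩ hmem
  simp only [hu] at hle
  linarith

/-- `W₂` is Lipschitz with respect to `L¹` under a positive density floor: if `μ, ν` are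
probability densities on `[a, b]` bounded below by `μ_min > 0` there, then
`d_{W2}(μ, ν) ≤ (1/μ_min) ‖μ − ν‖_{L¹([a,b])}` and the quantile functions satisfy the same
uniform bound on `(0, 1)`. -/
theorem w2_lipschitz_L1_with_density_floor
    (a b : ℝ) (hab : a < b) (μ ν : ℝ → ℝ) (μmin : ℝ) (hμmin : 0 < μmin)
    (hμnonneg : ∀ x, 0 ≤ μ x) (hνnonneg : ∀ x, 0 ≤ ν x)
    (hμsupp : ∀ x, x ∉ Set.Icc a b → μ x = 0) (hνsupp : ∀ x, x ∉ Set.Icc a b → ν x = 0)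
    (hμint : ∫ x in a..b, μ x = 1) (hνint : ∫ x in a..b, ν x = 1)
    (hμfloor : ∀ x ∈ Set.Icc a b, μmin ≤ μ x) (hνfloor : ∀ x ∈ Set.Icc a b, μmin ≤ ν x) :
    wasserstein 2 μ ν ≤ (1 / μmin) * ∫ x in a..b, |μ x - ν x| ∧
    ∀ z ∈ Set.Ioo (0:ℝ) 1,
      |quantileOf μ z - quantileOf ν z| ≤ (1 / μmin) * ∫ x in a..b, |μ x - ν x| := by
  have hμI : Integrable μ := aux_integrable hab.le μ hμsupp hμint
  have hνI : Integrable ν := aux_integrable hab.le ν hνsupp hνint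
  set L := ∫ x in a..b, |μ x - ν x| with hLdef
  have hL0 : 0 ≤ L := intervalIntegral.integral_nonneg hab.le fun x _ => abs_nonneg _
  have habs_comm : (∫ x in a..b, |ν x - μ x|) = L := by
    rw [hLdef]
    congr 1
    funext x
    exact abs_sub_comm _ _
  have key : ∀ z ∈ Set.Ioo (0:ℝ) 1, |quantileOf μ z - quantileOf ν z| ≤ L / μmin := by
    intro z hz
    have h1 := aux_quantile_le hab hμmin μ ν hμI hνI hμnonneg hνnonneg hμsupp hνsupp
      hμint hνint hμfloor hz
    have h2 := aux_quantile_le hab hμmin ν μ hνI hμI hνnonneg hμnonneg hνsupp hμsupp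
      hνint hμint hνfloor hz
    rw [habs_comm] at h2
    rw [abs_sub_le_iff]
    exact ⟨by linarith, by linarith⟩
  have hdiv : (1 / μmin) * L = L / μmin := by ring
  have hC0 : 0 ≤ L / μmin := div_nonneg hL0 hμmin.le
  constructor
  · have hwp0 : 0 ≤ wassersteinPow 2 μ ν :=
      setIntegral_nonneg measurableSet_Ioo fun z _ => Real.rpow_nonneg (abs_nonneg _) _
    have hwp_le : wassersteinPow 2 μ ν ≤ (L / μmin) ^ (2:ℝ) := by
      have hb : ∀ᵐ z ∂(volume : Measure ℝ), z ∈ Set.Ioo (0:ℝ) 1 →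
          ‖|quantileOf μ z - quantileOf ν z| ^ (2:ℝ)‖ ≤ (L / μmin) ^ (2:ℝ) := by
        refine Filter.Eventually.of_forall fun z hz => ?_
        rw [Real.norm_eq_abs, abs_of_nonneg (Real.rpow_nonneg (abs_nonneg _) _)]
        exact Real.rpow_le_rpow (abs_nonneg _) (key z hz) (by norm_num)
      have hfin : (volume : Measure ℝ) (Set.Ioo (0:ℝ) 1) < ⊤ := by
        rw [Real.volume_Ioo]; exact ENNReal.ofReal_lt_top
      have := norm_setIntegral_le_of_norm_le_const_ae' hfin hb
      rw [measureReal_def, Real.volume_Ioo] at this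
      simp only [sub_zero, ENNReal.toReal_ofReal (by norm_num : (0:ℝ) ≤ 1), mul_one] at this
      calc wassersteinPow 2 μ ν ≤ ‖wassersteinPow 2 μ ν‖ := le_abs_self _
        _ ≤ (L / μmin) ^ (2:ℝ) := this
    have hW : wasserstein 2 μ ν ≤ ((L/μmin)^(2:ℝ))^((1:ℝ)/2) := by
      unfold wasserstein
      exact Real.rpow_le_rpow hwp0 hwp_le (by norm_num)
    rw [← Real.rpow_mul hC0, show (2:ℝ)*((1:ℝ)/2) = 1 by norm_num, Real.rpow_one] at hW
    rw [hdiv]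
    exact hW
  · intro z hz
    rw [hdiv]
    exact key z hz
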